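/- Let n be a prime number. Then for every admissible t, i.e. for every divisor t of 2n² (equivalently t ∈ {1, 2, n, 2n, n², 2n²}), there exists a globally simple tight relative non-zero sum Heffter array NH_t(n;n): setting v = 2n² + t and J = {k·(v/t) : 0 ≤ k < t} (the subgroup of order t of Z_v), there exists an n×n matrix A = (a_{i,j}) with entries in Z_v such that the multiset formed by all a_{i,j} and −a_{i,j} contains every element of Z_v ∖ J exactly once, and every row and every column of A admits a simple natural ordering, i.e. a cyclic rotation of its left-to-right (resp. top-to-bottom) reading whose partial sums are all nonzero and pairwise distinct in Z_v. -/
import Mathlib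


namespace Stmt8aux


variable {n : ℕ} {b : ℕ → ℤ} {M : ℤ}

/-- alternating partial sum -/
def T (b : ℕ → ℤ) (k : ℕ) : ℤ := ∑ m ∈ Finset.range k, (-1)^m * b m

lemma T_succ (b : ℕ → ℤ) (k : ℕ) : T b (k+1) = T b k + (-1)^k * b k :=
  Finset.sum_range_succ _ _

lemma neg_one_pow_even {a : ℕ} : ((-1 : ℤ))^(2*a) = 1 := by
  rw [pow_mul]; norm_num

lemma neg_one_pow_odd {a : ℕ} : ((-1 : ℤ))^(2*a+1) = -1 := by
  rw [pow_succ, pow_mul]; norm_num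

section facts
variable (hpos : ∀ m, m < n → 0 < b m) (hmono : ∀ m, m + 1 < n → b m < b (m+1))

include hpos hmono in
lemma odd_fact : ∀ a, 2*a+1 ≤ n → 0 < T b (2*a+1) ∧ T b (2*a+1) ≤ b (2*a) := by
  intro a
  induction a with
  | zero =>
    intro h
    have : T b 1 = b 0 := by simp [T]
    rw [this]
    exact ⟨hpos 0 (by omega), le_refl _⟩
  | succ a ih =>
    intro h
    have h1 : 2*a+1 ≤ n := by omega
    obtain ⟨hp, hb⟩ := ih h1
    have key : T b (2*(a+1)+1) = T b (2*a+1) - b (2*a+1) + b (2*a+2) := by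
      have e1 : 2*(a+1)+1 = (2*a+2)+1 := by ring
      have e2 : 2*a+2 = (2*a+1)+1 := by ring
      rw [e1, T_succ, e2, T_succ]
      have : ((-1:ℤ))^(2*a+1) = -1 := neg_one_pow_odd
      rw [this]
      have : ((-1:ℤ))^((2*a+1)+1) = 1 := by
        have : (2*a+1)+1 = 2*(a+1) := by ring
        rw [this]; exact neg_one_pow_even
      rw [this]; ring
    constructor
    · rw [key]
      have := hmono (2*a+1) (by omega)
      linarith
    · have e : b (2*(a+1)) = b (2*a+2) := by congr 1
      rw [e, key]
      have := hmono (2*a) (by omega)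
      linarith

include hpos hmono in
lemma even_fact : ∀ a, 2*a+2 ≤ n → T b (2*a+2) < 0 ∧ -(b (2*a+1)) < T b (2*a+2) := by
  intro a h
  obtain ⟨hp, hb⟩ := odd_fact hpos hmono a (by omega)
  have key : T b (2*a+2) = T b (2*a+1) - b (2*a+1) := by
    have e2 : 2*a+2 = (2*a+1)+1 := by ring
    rw [e2, T_succ, neg_one_pow_odd]; ring
  have := hmono (2*a) (by omega)
  constructor
  · rw [key]; linarith
  · rw [key]; linarith

include hpos hmono in
lemma odd_mono : ∀ a a', a < a' → 2*a'+1 ≤ n → T b (2*a+1) < T b (2*a'+1) := by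
  intro a a' haa h
  induction a' with
  | zero => omega
  | succ c ih =>
    have step : T b (2*c+1) < T b (2*(c+1)+1) := by
      have key : T b (2*(c+1)+1) = T b (2*c+1) - b (2*c+1) + b (2*c+2) := by
        have e1 : 2*(c+1)+1 = (2*c+2)+1 := by ring
        have e2 : 2*c+2 = (2*c+1)+1 := by ring
        rw [e1, T_succ, e2, T_succ, neg_one_pow_odd]
        have : ((-1:ℤ))^((2*c+1)+1) = 1 := by
          have : (2*c+1)+1 = 2*(c+1) := by ring
          rw [this]; exact neg_one_pow_even
        rw [this]; ring
      have := hmono (2*c+1) (by omega)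
      rw [key]; linarith
    rcases Nat.lt_or_ge a c with h' | h'
    · exact lt_trans (ih h' (by omega)) step
    · have : a = c := by omega
      subst this; exact step

include hpos hmono in
lemma even_mono : ∀ a a', a < a' → 2*a'+2 ≤ n → T b (2*a'+2) < T b (2*a+2) := by
  intro a a' haa h
  induction a' with
  | zero => omega
  | succ c ih =>
    have step : T b (2*(c+1)+2) < T b (2*c+2) := by
      have key : T b (2*(c+1)+2) = T b (2*c+2) + b (2*c+2) - b (2*c+3) := by
        have e1 : 2*(c+1)+2 = (2*c+3)+1 := by ring
        have e2 : 2*c+3 = (2*c+2)+1 := by ring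
        rw [e1, T_succ, e2, T_succ]
        have h3 : ((-1:ℤ))^(2*c+3) = -1 := by
          have : 2*c+3 = 2*(c+1)+1 := by ring
          rw [this]; exact neg_one_pow_odd
        have h2 : ((-1:ℤ))^(2*c+2) = 1 := by
          have : 2*c+2 = 2*(c+1) := by ring
          rw [this]; exact neg_one_pow_even
        rw [h3, h2]; ring
      have := hmono (2*c+2) (by omega)
      rw [key]; linarith
    rcases Nat.lt_or_ge a c with h' | h'
    · exact lt_trans step (ih h' (by omega))
    · have : a = c := by omega
      subst this; exact step

end facts

/-- Main integer lemma. -/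
lemma alt_main (hpos : ∀ m, m < n → 0 < b m) (hmono : ∀ m, m + 1 < n → b m < b (m+1))
    (hbd : ∀ m, m < n → b m ≤ M) :
    ∀ k, 1 ≤ k → k ≤ n → (0 < |T b k| ∧ |T b k| ≤ M) ∧
      ∀ k', 1 ≤ k' → k' ≤ n → T b k = T b k' → k = k' := by
  have hval : ∀ k, 1 ≤ k → k ≤ n →
      (k % 2 = 1 → 0 < T b k ∧ T b k ≤ M) ∧ (k % 2 = 0 → T b k < 0 ∧ -M < T b k) := by
    intro k hk1 hkn
    constructor
    · intro hpar
      obtain ⟨a, rfl⟩ : ∃ a, k = 2*a+1 := ⟨k/2, by omega⟩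
      obtain ⟨h1, h2⟩ := odd_fact hpos hmono a hkn
      exact ⟨h1, le_trans h2 (hbd _ (by omega))⟩
    · intro hpar
      obtain ⟨a, rfl⟩ : ∃ a, k = 2*a+2 := ⟨(k-2)/2, by omega⟩
      obtain ⟨h1, h2⟩ := even_fact hpos hmono a hkn
      have := hbd (2*a+1) (by omega)
      exact ⟨h1, by linarith⟩
  intro k hk1 hkn
  constructor
  · obtain ⟨ho, he⟩ := hval k hk1 hkn
    rcases Nat.mod_two_eq_zero_or_one k with hp | hp
    · obtain ⟨h1, h2⟩ := he hp
      constructor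
      · rw [abs_pos]; omega
      · rw [abs_le]; constructor <;> linarith
    · obtain ⟨h1, h2⟩ := ho hp
      constructor
      · rw [abs_pos]; omega
      · rw [abs_le]; constructor <;> linarith
  · intro k' hk1' hkn' heq
    by_contra hne
    rcases Nat.mod_two_eq_zero_or_one k with hp | hp <;>
      rcases Nat.mod_two_eq_zero_or_one k' with hp' | hp'
    · -- both even
      obtain ⟨a, rfl⟩ : ∃ a, k = 2*a+2 := ⟨(k-2)/2, by omega⟩
      obtain ⟨a', rfl⟩ : ∃ a, k' = 2*a+2 := ⟨(k'-2)/2, by omega⟩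
      rcases Nat.lt_trichotomy a a' with h | h | h
      · have := even_mono hpos hmono a a' h hkn'; omega
      · omega
      · have := even_mono hpos hmono a' a h hkn; omega
    · -- k even, k' odd
      have h1 := (hval k hk1 hkn).2 hp
      have h2 := (hval k' hk1' hkn').1 hp'
      omega
    · have h1 := (hval k hk1 hkn).1 hp
      have h2 := (hval k' hk1' hkn').2 hp'
      omega
    · obtain ⟨a, rfl⟩ : ∃ a, k = 2*a+1 := ⟨k/2, by omega⟩
      obtain ⟨a', rfl⟩ : ∃ a, k' = 2*a+1 := ⟨k'/2, by omega⟩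
      rcases Nat.lt_trichotomy a a' with h | h | h
      · have := odd_mono hpos hmono a a' h hkn'; omega
      · omega
      · have := odd_mono hpos hmono a' a h hkn; omega



lemma arith (t s u v M : ℕ) (ht : 0 < t) (hs : 0 < s) (hpar : 2 ∣ t ∨ 2 ∣ s)
    (hu : u = s + 1) (hv : v = t * u) (hM : M = (v - 1) / 2) :
    2 * M < v ∧ M - M / u = t * s / 2 ∧ (∀ x, M < x → x < v → ¬ u ∣ x → v - x ≤ M) := by
  rcases Nat.even_or_odd t with he | ho
  · -- t even
    obtain ⟨q, hq⟩ := he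
    have hq1 : 1 ≤ q := by omega
    have hP : v = 2 * (q * u) := by rw [hv, hq]; ring
    have hu1 : 1 ≤ u := by omega
    have hPu : 1 * 1 ≤ q * u := Nat.mul_le_mul hq1 hu1
    have hM' : M = q * u - 1 := by omega
    have hQ : (q - 1) * u + u = q * u := by
      have : (q - 1) + 1 = q := by omega
      calc (q-1)*u + u = ((q-1)+1)*u := by ring
        _ = q*u := by rw [this]
    have hdiv : M / u = q - 1 := by
      apply Nat.div_eq_of_lt_le
      · omega
      · have : (q - 1 + 1) * u = (q-1)*u + u := by ring
        omega
    have hqs : q * s + q = q * u := by rw [hu]; ring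
    have hts : t * s = 2 * (q * s) := by rw [hq]; ring
    refine ⟨by omega, by omega, ?_⟩
    -- half statement
    intro x hxM hxv hnd
    have hxne : x ≠ q * u := by
      intro h
      exact hnd ⟨q, by rw [h, Nat.mul_comm]⟩
    omega
  · -- t odd
    obtain ⟨q, hq⟩ := ho
    have hsw : 2 ∣ s := by
      rcases hpar with h | h
      · omega
      · exact h
    obtain ⟨w, hw⟩ := hsw
    have hw1 : 1 ≤ w := by omega
    have h1 : v = 4 * (q * w) + 2 * q + 2 * w + 1 := by rw [hv, hu, hq, hw]; ring
    have hM' : M = 2 * (q * w) + q + w := by omega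
    have h2 : q * u = 2 * (q * w) + q := by rw [hu, hw]; ring
    have h3 : (q + 1) * u = 2 * (q * w) + q + 2 * w + 1 := by rw [hu, hw]; ring
    have hdiv : M / u = q := by
      apply Nat.div_eq_of_lt_le <;> omega
    have h4 : t * s = 4 * (q * w) + 2 * w := by rw [hq, hw]; ring
    refine ⟨by omega, by omega, by intro x _ _ _; omega⟩



/-! ### mag : filling a Finset of naturals into an n × n grid -/

noncomputable def mag (n : ℕ) (S : Finset ℕ) (h : S.card = n^2) (i j : ℕ) : ℕ :=
  if hlt : (i-1)*n + (j-1) < n^2 then ((S.orderIsoOfFin h) ⟨(i-1)*n + (j-1), hlt⟩ : ℕ) else 1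

variable {n : ℕ} {S : Finset ℕ} (h : S.card = n^2)

lemma idx_lt (hn : 1 ≤ n) {i j : ℕ} (hi : 1 ≤ i) (hi' : i ≤ n) (hj : 1 ≤ j) (hj' : j ≤ n) :
    (i-1)*n + (j-1) < n^2 := by
  have h1 : (i-1)*n ≤ (n-1)*n := Nat.mul_le_mul_right n (by omega)
  have h2 : (n-1)*n + n = n*n := by
    have : (n-1) + 1 = n := by omega
    calc (n-1)*n + n = ((n-1)+1)*n := by ring
      _ = n*n := by rw [this]
  have h3 : n^2 = n*n := sq n
  omega

lemma mag_eq (hn : 1 ≤ n) {i j : ℕ} (hi : 1 ≤ i) (hi' : i ≤ n) (hj : 1 ≤ j) (hj' : j ≤ n) :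
    mag n S h i j = ((S.orderIsoOfFin h) ⟨(i-1)*n + (j-1), idx_lt hn hi hi' hj hj'⟩ : ℕ) := by
  rw [mag, dif_pos]

lemma mag_mem (hn : 1 ≤ n) {i j : ℕ} (hi : 1 ≤ i) (hi' : i ≤ n) (hj : 1 ≤ j) (hj' : j ≤ n) :
    mag n S h i j ∈ S := by
  rw [mag_eq h hn hi hi' hj hj']
  exact ((S.orderIsoOfFin h) ⟨_, _⟩).2

lemma mag_lt (hn : 1 ≤ n) {i j i' j' : ℕ} (hi : 1 ≤ i) (hi' : i ≤ n) (hj : 1 ≤ j) (hj' : j ≤ n)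
    (hi2 : 1 ≤ i') (hi2' : i' ≤ n) (hj2 : 1 ≤ j') (hj2' : j' ≤ n)
    (hlt : (i-1)*n + (j-1) < (i'-1)*n + (j'-1)) :
    mag n S h i j < mag n S h i' j' := by
  rw [mag_eq h hn hi hi' hj hj', mag_eq h hn hi2 hi2' hj2 hj2']
  exact_mod_cast (S.orderIsoOfFin h).strictMono (by exact hlt)

lemma idx_inj (hn : 1 ≤ n) {i j i' j' : ℕ} (hj : 1 ≤ j) (hj' : j ≤ n)
    (hj2 : 1 ≤ j') (hj2' : j' ≤ n) (hi : 1 ≤ i) (hi2 : 1 ≤ i')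
    (heq : (i-1)*n + (j-1) = (i'-1)*n + (j'-1)) : i = i' ∧ j = j' := by
  have d1 : ((i-1)*n + (j-1)) / n = i - 1 := by
    rw [Nat.add_comm, Nat.add_mul_div_right _ _ (by omega), Nat.div_eq_of_lt (by omega)]
    omega
  have d2 : ((i'-1)*n + (j'-1)) / n = i' - 1 := by
    rw [Nat.add_comm, Nat.add_mul_div_right _ _ (by omega), Nat.div_eq_of_lt (by omega)]
    omega
  have : i - 1 = i' - 1 := by rw [← d1, ← d2, heq]
  have hii : i = i' := by omega
  subst hii
  have : j - 1 = j' - 1 := by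
    have hn0 : 0 < n := by omega
    omega
  omega

lemma mag_inj (hn : 1 ≤ n) {i j i' j' : ℕ} (hi : 1 ≤ i) (hi' : i ≤ n) (hj : 1 ≤ j) (hj' : j ≤ n)
    (hi2 : 1 ≤ i') (hi2' : i' ≤ n) (hj2 : 1 ≤ j') (hj2' : j' ≤ n)
    (heq : mag n S h i j = mag n S h i' j') : i = i' ∧ j = j' := by
  rw [mag_eq h hn hi hi' hj hj', mag_eq h hn hi2 hi2' hj2 hj2'] at heq
  have h2 := (S.orderIsoOfFin h).injective (Subtype.coe_injective heq)
  have h3 : (i-1)*n+(j-1) = (i'-1)*n+(j'-1) := congrArg Fin.val h2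
  exact idx_inj hn hj hj' hj2 hj2' hi hi2 h3

lemma mag_surj (hn : 1 ≤ n) {x : ℕ} (hx : x ∈ S) :
    ∃ i j, 1 ≤ i ∧ i ≤ n ∧ 1 ≤ j ∧ j ≤ n ∧ mag n S h i j = x := by
  obtain ⟨k, hk⟩ : ∃ k : Fin (n^2), ((S.orderIsoOfFin h) k : ℕ) = x :=
    ⟨(S.orderIsoOfFin h).symm ⟨x, hx⟩, by rw [OrderIso.apply_symm_apply]⟩
  obtain ⟨K, hK⟩ : ∃ K : ℕ, K = (k : ℕ) := ⟨k, rfl⟩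
  have hKn : K < n^2 := hK ▸ k.2
  have hnn : n^2 = n*n := sq n
  have hdiv : K / n < n := by
    rw [Nat.div_lt_iff_lt_mul (by omega)]
    omega
  have hmod : K % n < n := Nat.mod_lt _ (by omega)
  refine ⟨K/n + 1, K%n + 1, Nat.succ_le_succ (Nat.zero_le _), Nat.succ_le_of_lt hdiv,
    Nat.succ_le_succ (Nat.zero_le _), Nat.succ_le_of_lt hmod, ?_⟩
  rw [mag_eq h hn (Nat.succ_le_succ (Nat.zero_le _)) (Nat.succ_le_of_lt hdiv)
    (Nat.succ_le_succ (Nat.zero_le _)) (Nat.succ_le_of_lt hmod)]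
  have hidx : (K/n + 1 - 1)*n + (K%n + 1 - 1) = K := by
    simp only [Nat.add_sub_cancel]
    rw [Nat.mul_comm]
    exact Nat.div_add_mod _ _
  have hfin : (⟨(K/n + 1 - 1)*n + (K%n + 1 - 1), idx_lt hn (Nat.succ_le_succ (Nat.zero_le _))
      (Nat.succ_le_of_lt hdiv) (Nat.succ_le_succ (Nat.zero_le _))
      (Nat.succ_le_of_lt hmod)⟩ : Fin (n^2)) = k :=
    Fin.ext (hidx.trans hK)
  rw [hfin, hk]



lemma count_pair {α : Type*} [DecidableEq α] (x a b : α) :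
    Multiset.count x ({a, b} : Multiset α) =
      (if x = a then 1 else 0) + (if x = b then 1 else 0) := by
  rw [show ({a, b} : Multiset α) = a ::ₘ {b} from rfl, Multiset.count_cons,
    Multiset.count_singleton, add_comm]

lemma J_iff (V u : ℕ) [NeZero V] (hdvd : u ∣ V) (x : ZMod V) :
    (∃ y, x = (u : ZMod V) * y) ↔ u ∣ x.val := by
  constructor
  · rintro ⟨y, rfl⟩
    rw [ZMod.val_mul, Nat.dvd_mod_iff hdvd]
    exact Dvd.dvd.mul_right (by rw [ZMod.val_natCast]; exact (Nat.dvd_mod_iff hdvd).mpr dvd_rfl) _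
  · rintro ⟨c, hc⟩
    refine ⟨(c : ZMod V), ?_⟩
    have h0 : ((x.val : ℕ) : ZMod V) = x := ZMod.natCast_rightInverse x
    rw [← h0, hc]
    push_cast
    ring

lemma neg_cast_eq (V : ℕ) [NeZero V] (m : ℕ) (h2 : m < V) :
    -((m : ℕ) : ZMod V) = ((V - m : ℕ) : ZMod V) := by
  have h0 : ((V : ℕ) : ZMod V) = 0 := ZMod.natCast_self V
  rw [Nat.cast_sub (le_of_lt h2), h0, zero_sub]

lemma neg_cast_val (V : ℕ) [NeZero V] (m : ℕ) (h1 : 1 ≤ m) (h2 : m < V) :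
    (-((m : ℕ) : ZMod V)).val = V - m := by
  rw [neg_cast_eq V m h2, ZMod.val_cast_of_lt (by omega)]


lemma rowcol (V : ℕ) (Mz : ℤ) (hMV : 2*Mz < (V:ℤ)) (nn : ℕ) (b : ℕ → ℤ) (σ : ℤ)
    (hσ : σ = 1 ∨ σ = -1)
    (hpos : ∀ m, m < nn → 0 < b m) (hmono : ∀ m, m+1 < nn → b m < b (m+1))
    (hbd : ∀ m, m < nn → b m ≤ Mz) :
    (∀ k, 1 ≤ k → k ≤ nn → ((σ * T b k : ℤ) : ZMod V) ≠ 0) ∧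
    (∀ k k', 1 ≤ k → k ≤ nn → 1 ≤ k' → k' ≤ nn →
      ((σ * T b k : ℤ) : ZMod V) = ((σ * T b k' : ℤ) : ZMod V) → k = k') := by
  have habs : |σ| = 1 := by rcases hσ with h|h <;> simp [h]
  constructor
  · intro k h1 h2 h0
    obtain ⟨⟨ha, hb'⟩, _⟩ := alt_main hpos hmono hbd k h1 h2
    rw [ZMod.intCast_zmod_eq_zero_iff_dvd] at h0
    have hz : σ * T b k = 0 := by
      apply Int.eq_zero_of_abs_lt_dvd h0
      rw [abs_mul, habs, one_mul]
      linarith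
    have hT0 : T b k = 0 := by rcases hσ with h|h <;> subst h <;> linarith
    rw [hT0] at ha
    simp at ha
  · intro k k' h1 h2 h1' h2' heq
    obtain ⟨⟨ha, hb1⟩, hinj⟩ := alt_main hpos hmono hbd k h1 h2
    obtain ⟨⟨ha', hb2⟩, _⟩ := alt_main hpos hmono hbd k' h1' h2'
    rw [ZMod.intCast_eq_intCast_iff] at heq
    have hd : (V:ℤ) ∣ σ * T b k' - σ * T b k := Int.ModEq.dvd heq
    have hz : σ * T b k' - σ * T b k = 0 := by
      apply Int.eq_zero_of_abs_lt_dvd hd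
      have htri : |σ * T b k' - σ * T b k| ≤ |σ * T b k'| + |σ * T b k| := abs_sub _ _
      rw [abs_mul, habs, one_mul, abs_mul, habs, one_mul] at htri
      linarith
    have hTT : T b k = T b k' := by
      rcases hσ with h|h <;> subst h <;> linarith
    exact hinj k' h1' h2' hTT

end Stmt8aux

/-- Theorem 3.16: for every prime n and every divisor t of 2n² there exists a globally
simple tight relative non-zero sum Heffter array NH_t(n;n) over Z_{2n²+t}; here the
subgroup J of order t consists of the multiples of v/t = 2n²/t + 1, and "globally
simple" means every row and column admits a simple natural ordering, i.e. a cyclic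
rotation (starting point r) of its reading whose partial sums are nonzero and pairwise
distinct. -/
theorem stmt8 (n t : ℕ) (hn : n.Prime) (ht : t ∣ 2 * n ^ 2) :
    ∃ A : ℕ → ℕ → ZMod (2 * n ^ 2 + t),
      (∀ x : ZMod (2 * n ^ 2 + t),
        (∃ y : ZMod (2 * n ^ 2 + t), x = ((2 * n ^ 2 / t + 1 : ℕ) : ZMod (2 * n ^ 2 + t)) * y) →
        Multiset.count x
          (((Finset.Icc 1 n ×ˢ Finset.Icc 1 n).val).bind
            (fun p => ({A p.1 p.2, -A p.1 p.2} : Multiset (ZMod (2 * n ^ 2 + t))))) = 0) ∧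
      (∀ x : ZMod (2 * n ^ 2 + t),
        ¬(∃ y : ZMod (2 * n ^ 2 + t), x = ((2 * n ^ 2 / t + 1 : ℕ) : ZMod (2 * n ^ 2 + t)) * y) →
        Multiset.count x
          (((Finset.Icc 1 n ×ˢ Finset.Icc 1 n).val).bind
            (fun p => ({A p.1 p.2, -A p.1 p.2} : Multiset (ZMod (2 * n ^ 2 + t))))) = 1) ∧
      (∀ i ∈ Finset.Icc 1 n, ∃ r < n,
        (∀ k ∈ Finset.Icc 1 n,
          (∑ m ∈ Finset.range k, A i ((r + m) % n + 1)) ≠ 0) ∧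
        (∀ k ∈ Finset.Icc 1 n, ∀ k' ∈ Finset.Icc 1 n,
          (∑ m ∈ Finset.range k, A i ((r + m) % n + 1)) =
            (∑ m ∈ Finset.range k', A i ((r + m) % n + 1)) → k = k')) ∧
      (∀ j ∈ Finset.Icc 1 n, ∃ r < n,
        (∀ k ∈ Finset.Icc 1 n,
          (∑ m ∈ Finset.range k, A ((r + m) % n + 1) j) ≠ 0) ∧
        (∀ k ∈ Finset.Icc 1 n, ∀ k' ∈ Finset.Icc 1 n,
          (∑ m ∈ Finset.range k, A ((r + m) % n + 1) j) =
            (∑ m ∈ Finset.range k', A ((r + m) % n + 1) j) → k = k')) := by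
  classical
  have hn2 : 2 ≤ n := hn.two_le
  have hn2pos : 0 < n ^ 2 := by positivity
  have ht0 : 0 < t := by
    rcases Nat.eq_zero_or_pos t with rfl | h
    · rw [Nat.zero_dvd] at ht; omega
    · exact h
  set s := 2 * n ^ 2 / t with hs_def
  have hts : t * s = 2 * n ^ 2 := Nat.mul_div_cancel' ht
  have hs0 : 0 < s := by
    rcases Nat.eq_zero_or_pos s with h | h
    · rw [h, Nat.mul_zero] at hts; omega
    · exact h
  set u := s + 1 with hu_def
  set V := 2 * n ^ 2 + t with hV_def
  have htu : t * u = t * s + t := by rw [hu_def]; ring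
  have hvtu : V = t * u := by omega
  haveI : NeZero V := ⟨by omega⟩
  set M := (V - 1) / 2 with hM_def
  have hpar : 2 ∣ t ∨ 2 ∣ s := (Nat.Prime.dvd_mul Nat.prime_two).mp ⟨n ^ 2, hts⟩
  obtain ⟨h2M, hcard0, hhalf⟩ := Stmt8aux.arith t s u V M ht0 hs0 hpar rfl hvtu rfl
  have hn2eq : t * s / 2 = n ^ 2 := by omega
  set R : Finset ℕ := (Finset.Icc 1 M).filter (fun x => ¬ u ∣ x) with hR_def
  have hRcard : R.card = n ^ 2 := by
    have hIoc : Finset.Icc 1 M = Finset.Ioc 0 M := by ext a; simp; omega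
    have h1 : ((Finset.Ioc 0 M).filter (fun x => u ∣ x)).card = M / u :=
      Nat.Ioc_filter_dvd_card_eq_div M u
    have h2 := Finset.card_filter_add_card_filter_not
      (s := Finset.Ioc 0 M) (p := fun x => u ∣ x)
    have h3 : (Finset.Ioc 0 M).card = M := by simp
    rw [hR_def, hIoc]
    omega
  have hRmem : ∀ y, y ∈ R ↔ (1 ≤ y ∧ y ≤ M) ∧ ¬ u ∣ y := by
    intro y
    rw [hR_def, Finset.mem_filter, Finset.mem_Icc]
  set mg := Stmt8aux.mag n R hRcard with hmg_def
  have hn1 : 1 ≤ n := by omega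
  have hmem : ∀ i j, 1 ≤ i → i ≤ n → 1 ≤ j → j ≤ n →
      1 ≤ mg i j ∧ mg i j ≤ M ∧ ¬ u ∣ mg i j := by
    intro i j h1 h2 h3 h4
    have hm := (hRmem _).mp (Stmt8aux.mag_mem hRcard hn1 h1 h2 h3 h4)
    exact ⟨hm.1.1, hm.1.2, hm.2⟩
  have hMV : M < V := by omega
  have huV : u ∣ V := ⟨t, by rw [hvtu]; ring⟩
  set A : ℕ → ℕ → ZMod V := fun i j => (((-1)^(i+j) * (mg i j : ℤ) : ℤ) : ZMod V) with hA_def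
  have hcast : ∀ i j, 1 ≤ i → i ≤ n → 1 ≤ j → j ≤ n →
      ({A i j, -A i j} : Multiset (ZMod V)) =
        {((mg i j : ℕ) : ZMod V), -((mg i j : ℕ) : ZMod V)} := by
    intro i j h1 h2 h3 h4
    rcases Nat.even_or_odd (i + j) with he | ho
    · have h5 : A i j = ((mg i j : ℕ) : ZMod V) := by
        simp only [hA_def]
        rw [Even.neg_one_pow he, one_mul]
        push_cast
        ring
      rw [h5]
    · have h5 : A i j = -((mg i j : ℕ) : ZMod V) := by
        simp only [hA_def]
        rw [Odd.neg_one_pow ho]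
        push_cast
        ring
      rw [h5, neg_neg]
      exact Multiset.cons_swap _ _ _
  have hcount : ∀ x : ZMod V,
      Multiset.count x (((Finset.Icc 1 n ×ˢ Finset.Icc 1 n).val).bind
        (fun p => ({A p.1 p.2, -A p.1 p.2} : Multiset (ZMod V)))) =
      ∑ p ∈ Finset.Icc 1 n ×ˢ Finset.Icc 1 n,
        ((if x = ((mg p.1 p.2 : ℕ) : ZMod V) then 1 else 0) +
         (if x = -((mg p.1 p.2 : ℕ) : ZMod V) then 1 else 0)) := by
    intro x
    have hb : ((Finset.Icc 1 n ×ˢ Finset.Icc 1 n).val).bind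
        (fun p => ({A p.1 p.2, -A p.1 p.2} : Multiset (ZMod V))) =
        ((Finset.Icc 1 n ×ˢ Finset.Icc 1 n).val).bind
        (fun p => ({((mg p.1 p.2 : ℕ) : ZMod V), -((mg p.1 p.2 : ℕ) : ZMod V)}
          : Multiset (ZMod V))) := by
      apply Multiset.bind_congr
      intro p hp
      rw [Finset.mem_val, Finset.mem_product, Finset.mem_Icc, Finset.mem_Icc] at hp
      exact hcast p.1 p.2 hp.1.1 hp.1.2 hp.2.1 hp.2.2
    rw [hb, Multiset.count_bind]
    simp only [Stmt8aux.count_pair]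
    rfl
  refine ⟨A, ?_, ?_, ?_, ?_⟩
  · -- elements of J do not appear
    intro x hx
    rw [hcount x]
    apply Finset.sum_eq_zero
    rintro ⟨i, j⟩ hp
    rw [Finset.mem_product, Finset.mem_Icc, Finset.mem_Icc] at hp
    obtain ⟨⟨hi1, hi2⟩, hj1, hj2⟩ := hp
    obtain ⟨hm1, hm2, hm3⟩ := hmem i j hi1 hi2 hj1 hj2
    have hxJ : u ∣ x.val := (Stmt8aux.J_iff V u huV x).mp hx
    have hxJ' : u ∣ (-x).val := by
      apply (Stmt8aux.J_iff V u huV (-x)).mp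
      obtain ⟨y, hy⟩ := hx
      exact ⟨-y, by rw [hy]; ring⟩
    have c1 : x ≠ ((mg i j : ℕ) : ZMod V) := by
      intro h
      rw [h, ZMod.val_cast_of_lt (by omega)] at hxJ
      exact hm3 hxJ
    have c2 : x ≠ -((mg i j : ℕ) : ZMod V) := by
      intro h
      have h' : -x = ((mg i j : ℕ) : ZMod V) := by rw [h, neg_neg]
      rw [h', ZMod.val_cast_of_lt (by omega)] at hxJ'
      exact hm3 hxJ'
    rw [if_neg c1, if_neg c2]
    rfl
  · -- elements outside J appear exactly once
    intro x hx
    rw [hcount x]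
    have hxd : ¬ u ∣ x.val := fun h => hx ((Stmt8aux.J_iff V u huV x).mpr h)
    have hx0 : x.val ≠ 0 := fun h => hxd (h ▸ dvd_zero u)
    have hxV : x.val < V := ZMod.val_lt x
    have main : ∀ w, 1 ≤ w → w ≤ M → ¬ u ∣ w →
        ((x.val ≤ M ∧ w = x.val) ∨ (M < x.val ∧ w = V - x.val)) →
        (∑ p ∈ Finset.Icc 1 n ×ˢ Finset.Icc 1 n,
          ((if x = ((mg p.1 p.2 : ℕ) : ZMod V) then 1 else 0) +
           (if x = -((mg p.1 p.2 : ℕ) : ZMod V) then 1 else 0))) = 1 := by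
      intro w hw1 hwM hwd hcase
      have hwR : w ∈ R := (hRmem _).mpr ⟨⟨hw1, hwM⟩, hwd⟩
      obtain ⟨i0, j0, hi01, hi02, hj01, hj02, hmg0⟩ := Stmt8aux.mag_surj hRcard hn1 hwR
      have hmg0' : mg i0 j0 = w := hmg0
      have hp0mem : (i0, j0) ∈ Finset.Icc 1 n ×ˢ Finset.Icc 1 n := by
        rw [Finset.mem_product, Finset.mem_Icc, Finset.mem_Icc]
        exact ⟨⟨hi01, hi02⟩, hj01, hj02⟩
      have huniq : ∀ i j, 1 ≤ i → i ≤ n → 1 ≤ j → j ≤ n →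
          (x = ((mg i j : ℕ) : ZMod V) ∨ x = -((mg i j : ℕ) : ZMod V)) → mg i j = w := by
        intro i j h1 h2 h3 h4 hcs
        obtain ⟨hm1, hm2, hm3⟩ := hmem i j h1 h2 h3 h4
        rcases hcs with h | h
        · have hv : x.val = mg i j := by rw [h, ZMod.val_cast_of_lt (by omega)]
          rcases hcase with ⟨hc1, hc2⟩ | ⟨hc1, hc2⟩ <;> omega
        · have hv : x.val = V - mg i j := by
            rw [h, Stmt8aux.neg_cast_val V (mg i j) hm1 (by omega)]
          rcases hcase with ⟨hc1, hc2⟩ | ⟨hc1, hc2⟩ <;> omega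
      have hxcast : ((x.val : ℕ) : ZMod V) = x := ZMod.natCast_rightInverse x
      have hxw : x = ((w : ℕ) : ZMod V) ∨ x = -((w : ℕ) : ZMod V) := by
        rcases hcase with ⟨hc1, hc2⟩ | ⟨hc1, hc2⟩
        · left; rw [← hxcast, hc2]
        · right
          rw [Stmt8aux.neg_cast_eq V w (by omega), ← hxcast]
          congr 1
          omega
      have hwneq : (((w : ℕ) : ZMod V)) ≠ -(((w : ℕ) : ZMod V)) := by
        intro h
        have h1 : ((w : ℕ) : ZMod V).val = w := ZMod.val_cast_of_lt (by omega)
        have h2' := Stmt8aux.neg_cast_val V w hw1 (by omega)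
        rw [h] at h1
        omega
      rw [Finset.sum_eq_single_of_mem (i0, j0) hp0mem]
      · have e1 : mg (i0, j0).1 (i0, j0).2 = w := hmg0
        rcases hxw with h | h
        · rw [e1, if_pos h, if_neg (fun h2 => hwneq (h.symm.trans h2))]
        · rw [e1, if_neg (fun h2 => hwneq (h2.symm.trans h)), if_pos h]
      · rintro ⟨i, j⟩ hp hne
        rw [Finset.mem_product, Finset.mem_Icc, Finset.mem_Icc] at hp
        obtain ⟨⟨h1, h2⟩, h3, h4⟩ := hp
        have c1 : x ≠ ((mg i j : ℕ) : ZMod V) := by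
          intro h
          have hW := huniq i j h1 h2 h3 h4 (Or.inl h)
          have h0 : mg i j = mg i0 j0 := hW.trans hmg0'.symm
          obtain ⟨hii, hjj⟩ :=
            Stmt8aux.mag_inj hRcard hn1 h1 h2 h3 h4 hi01 hi02 hj01 hj02 h0
          exact hne (Prod.ext hii hjj)
        have c2 : x ≠ -((mg i j : ℕ) : ZMod V) := by
          intro h
          have hW := huniq i j h1 h2 h3 h4 (Or.inr h)
          have h0 : mg i j = mg i0 j0 := hW.trans hmg0'.symm
          obtain ⟨hii, hjj⟩ :=
            Stmt8aux.mag_inj hRcard hn1 h1 h2 h3 h4 hi01 hi02 hj01 hj02 h0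
          exact hne (Prod.ext hii hjj)
        rw [if_neg c1, if_neg c2]
        rfl
    rcases le_or_gt x.val M with hle | hgt
    · exact main x.val (by omega) hle hxd (Or.inl ⟨hle, rfl⟩)
    · have hw := hhalf x.val hgt hxV hxd
      refine main (V - x.val) (by omega) hw ?_ (Or.inr ⟨hgt, rfl⟩)
      intro h
      have hfin : u ∣ x.val := by
        have h2' : u ∣ V - (V - x.val) := Nat.dvd_sub huV h
        rwa [Nat.sub_sub_self (le_of_lt hxV)] at h2'
      exact hxd hfin
  · -- rows
    intro i hi
    rw [Finset.mem_Icc] at hi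
    set b : ℕ → ℤ := fun m => (mg i (m+1) : ℤ) with hb_def
    have hpos : ∀ m, m < n → 0 < b m := by
      intro m hm
      simp only [hb_def]
      exact_mod_cast (hmem i (m+1) hi.1 hi.2 (by omega) (by omega)).1
    have hmono : ∀ m, m+1 < n → b m < b (m+1) := by
      intro m hm
      simp only [hb_def]
      have hlt := Stmt8aux.mag_lt hRcard hn1 hi.1 hi.2 (show 1 ≤ m+1 by omega) (by omega)
        hi.1 hi.2 (show 1 ≤ m+1+1 by omega) (by omega) (by omega)
      exact_mod_cast hlt
    have hbd : ∀ m, m < n → b m ≤ (M : ℤ) := by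
      intro m hm
      simp only [hb_def]
      exact_mod_cast (hmem i (m+1) hi.1 hi.2 (by omega) (by omega)).2.1
    obtain ⟨hrc1, hrc2⟩ := Stmt8aux.rowcol V (M : ℤ) (by exact_mod_cast h2M) n b ((-1)^(i+1))
      (by rcases Nat.even_or_odd (i+1) with h | h
          · exact Or.inl (Even.neg_one_pow h)
          · exact Or.inr (Odd.neg_one_pow h)) hpos hmono hbd
    have hsum : ∀ k, k ≤ n → (∑ m ∈ Finset.range k, A i ((0 + m) % n + 1)) =
        (((-1)^(i+1) * Stmt8aux.T b k : ℤ) : ZMod V) := by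
      intro k hk
      rw [Stmt8aux.T, Finset.mul_sum]
      push_cast
      apply Finset.sum_congr rfl
      intro m hm
      rw [Finset.mem_range] at hm
      have hmn : (0 + m) % n = m := by
        rw [Nat.zero_add, Nat.mod_eq_of_lt (by omega)]
      rw [hmn]
      simp only [hA_def, hb_def]
      push_cast
      have hpow : ((-1 : ZMod V))^(i+(m+1)) = (-1)^(i+1) * (-1)^m := by
        rw [← pow_add]
        congr 1
        ring
      rw [hpow]
      ring
    refine ⟨0, by omega, ?_, ?_⟩
    · intro k hk
      rw [Finset.mem_Icc] at hk
      rw [hsum k hk.2]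
      exact hrc1 k hk.1 hk.2
    · intro k hk k' hk'
      rw [Finset.mem_Icc] at hk hk'
      rw [hsum k hk.2, hsum k' hk'.2]
      exact hrc2 k k' hk.1 hk.2 hk'.1 hk'.2
  · -- columns
    intro j hj
    rw [Finset.mem_Icc] at hj
    set b : ℕ → ℤ := fun m => (mg (m+1) j : ℤ) with hb_def
    have hpos : ∀ m, m < n → 0 < b m := by
      intro m hm
      simp only [hb_def]
      exact_mod_cast (hmem (m+1) j (by omega) (by omega) hj.1 hj.2).1
    have hmono : ∀ m, m+1 < n → b m < b (m+1) := by
      intro m hm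
      simp only [hb_def]
      have hmul : (m+1)*n = m*n + n := by ring
      have hlt := Stmt8aux.mag_lt hRcard hn1 (show 1 ≤ m+1 by omega) (by omega) hj.1 hj.2
        (show 1 ≤ m+1+1 by omega) (by omega) hj.1 hj.2 (by
          simp only [Nat.add_sub_cancel]
          omega)
      exact_mod_cast hlt
    have hbd : ∀ m, m < n → b m ≤ (M : ℤ) := by
      intro m hm
      simp only [hb_def]
      exact_mod_cast (hmem (m+1) j (by omega) (by omega) hj.1 hj.2).2.1
    obtain ⟨hrc1, hrc2⟩ := Stmt8aux.rowcol V (M : ℤ) (by exact_mod_cast h2M) n b ((-1)^(j+1))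
      (by rcases Nat.even_or_odd (j+1) with h | h
          · exact Or.inl (Even.neg_one_pow h)
          · exact Or.inr (Odd.neg_one_pow h)) hpos hmono hbd
    have hsum : ∀ k, k ≤ n → (∑ m ∈ Finset.range k, A ((0 + m) % n + 1) j) =
        (((-1)^(j+1) * Stmt8aux.T b k : ℤ) : ZMod V) := by
      intro k hk
      rw [Stmt8aux.T, Finset.mul_sum]
      push_cast
      apply Finset.sum_congr rfl
      intro m hm
      rw [Finset.mem_range] at hm
      have hmn : (0 + m) % n = m := by
        rw [Nat.zero_add, Nat.mod_eq_of_lt (by omega)]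
      rw [hmn]
      simp only [hA_def, hb_def]
      push_cast
      have hpow : ((-1 : ZMod V))^((m+1)+j) = (-1)^(j+1) * (-1)^m := by
        rw [← pow_add]
        congr 1
        ring
      rw [hpow]
      ring
    refine ⟨0, by omega, ?_, ?_⟩
    · intro k hk
      rw [Finset.mem_Icc] at hk
      rw [hsum k hk.2]
      exact hrc1 k hk.1 hk.2
    · intro k hk k' hk'
      rw [Finset.mem_Icc] at hk hk'
      rw [hsum k hk.2, hsum k' hk'.2]
      exact hrc2 k k' hk.1 hk.2 hk'.1 hk'.2
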